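/- Let k ≥ 0 be an integer and let Σ̃[k] be the group of affine transformations of V* generated by the maps λ ↦ σ.λ (σ ∈ Σ_r) together with the translations λ ↦ λ + (k+r)γ (γ ∈ Λ). Let Σ_r^+ ⊆ Σ̃[k] be the subgroup generated by the maps λ ↦ s_{i,i+1}.λ for 1 ≤ i ≤ r−2 together with λ ↦ s_{r−1,r}.λ + (k+r)·α^{r−1,r}, and let Σ_r^− ⊆ Σ̃[k] be the subgroup generated by the maps λ ↦ s_{i,i+1}.λ for 2 ≤ i ≤ r−1 together with λ ↦ s_{1,2}.λ + (k+r)·α^{1,2}. Then Σ_r^+ and Σ_r^− are each isomorphic to the symmetric group Σ_r, and if r > 2 then Σ_r^+ and Σ_r^− together generate Σ̃[k]. -/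

import Mathlib

open scoped BigOperators

attribute [local instance] Classical.propDecidable

noncomputable section

namespace Verlinde


variable {r : ℕ}

/-- The root `α^{ij} = e_i - e_j`, viewed as the linear functional `x_i - x_j`. -/
def stdRoot (r : ℕ) (i j : Fin r) : Fin r → ℝ :=
  fun t => (if t = i then 1 else 0) - (if t = j then 1 else 0)

/-- `B ∈ 𝓑`: an ordered tuple of roots forming a linear basis of
`V* = {a : ∑ i, a i = 0}`. -/
def IsOB (r : ℕ) (B : Fin (r - 1) → Fin r → ℝ) : Prop :=
  (∀ m, ∃ i j, i ≠ j ∧ B m = stdRoot r i j) ∧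
    LinearIndependent ℝ B ∧
    ∀ a : Fin r → ℝ, (∑ i, a i) = 0 → a ∈ Submodule.span ℝ (Set.range B)

/-- Coordinates of `a` with respect to the tuple `B` (junk unless such
coordinates exist; they are unique when `B` is linearly independent). -/
def coordsOf (B : Fin (r - 1) → Fin r → ℝ) (a : Fin r → ℝ) : Fin (r - 1) → ℝ :=
  if h : ∃ c : Fin (r - 1) → ℝ, a = ∑ j, c j • B j then h.choose else 0

/-- The integer part `[a]_B ∈ Λ`. -/
def intPart (B : Fin (r - 1) → Fin r → ℝ) (a : Fin r → ℝ) : Fin r → ℝ :=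
  ∑ j, (⌊coordsOf B a j⌋ : ℝ) • B j

/-- The fractional part `{a}_B`. -/
def fracPart (B : Fin (r - 1) → Fin r → ℝ) (a : Fin r → ℝ) : Fin r → ℝ :=
  a - intPart B a

/-- `a ∈ V*` is regular if all its `B`-coordinates are non-integral, for every `B ∈ 𝓑`,
i.e. `{a}_B ∈ ∑_j (0,1)·β^{[j]}` for every `B ∈ 𝓑`. -/
def IsRegular (r : ℕ) (a : Fin r → ℝ) : Prop :=
  ∀ B, IsOB r B → ∀ j, Int.fract (coordsOf B a j) ≠ 0

/-- The flag `Fl(B)`: `Fl(B) j = span (β^{[j]}, …, β^{[r-1]})`. -/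
def flagOf (B : Fin (r - 1) → Fin r → ℝ) : Fin (r - 1) → Submodule ℝ (Fin r → ℝ) :=
  fun j => Submodule.span ℝ {x | ∃ i, j ≤ i ∧ B i = x}

/-- `B ⊣ C`. -/
def Dashv (B C : Fin (r - 1) → Fin r → ℝ) : Prop :=
  ∀ τ : Equiv.Perm (Fin (r - 1)), flagOf (B ∘ τ) ≠ flagOf C

/-- A diagonal basis: a subset of `𝓑` of cardinality `(r-1)!` any two distinct
members of which satisfy `B ⊣ C`. -/
def IsDiagonalBasis (r : ℕ) (D : Finset (Fin (r - 1) → Fin r → ℝ)) : Prop :=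
  D.card = (r - 1).factorial ∧ (∀ B ∈ D, IsOB r B) ∧
    ∀ B ∈ D, ∀ C ∈ D, B ≠ C → Dashv B C

/-- The index of the last coordinate (`r` in `1`-indexed notation). -/
def lastI (r : ℕ) (h : 0 < r) : Fin r := ⟨r - 1, by omega⟩

/-- `ρ = ((r-1)/2, (r-3)/2, …, (1-r)/2)`. -/
def rho (r : ℕ) : Fin r → ℝ := fun i => ((r : ℝ) - 1) / 2 - (i : ℝ)

/-- `σ · a`, where `(σ·a)_i = a_{σ⁻¹ i}`. -/
def permVec (σ : Equiv.Perm (Fin r)) (a : Fin r → ℝ) : Fin r → ℝ := fun i => a (σ⁻¹ i)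

/-- A nontrivial (ordered) partition `Π = (Π′, Π″)`, encoded by `Π′ = P`:
both parts nonempty and `r ∈ Π″`. -/
def NontrivPart (r : ℕ) (h : 0 < r) (P : Finset (Fin r)) : Prop :=
  P.Nonempty ∧ lastI r h ∉ P

/-- The wall `S_{Π,l} ⊆ V*`. -/
def wallSet (r : ℕ) (P : Finset (Fin r)) (l : ℤ) : Set (Fin r → ℝ) :=
  {c | (∑ i, c i) = 0 ∧ (∑ i ∈ P, c i) = (l : ℝ)}

/-- The simplex `Δ` of admissible parabolic weights. -/
def DeltaSet (r : ℕ) (h : 0 < r) : Set (Fin r → ℝ) :=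
  {c | (∑ i, c i) = 0 ∧ (∀ i j : Fin r, i < j → c j < c i) ∧
    c ⟨0, h⟩ - c (lastI r h) < 1}

/-- The chamber of a (regular) point `c ∈ V*`. -/
def chamberOf (r : ℕ) (c : Fin r → ℝ) : Set (Fin r → ℝ) :=
  {b | (∑ i, b i) = 0 ∧ IsRegular r b ∧ ∀ B, IsOB r B → intPart B b = intPart B c}

/-- `{i,j}` is an edge of `Tree(B)`. -/
def IsTreeEdge (B : Fin (r - 1) → Fin r → ℝ) (i j : Fin r) : Prop :=
  ∃ m, B m = stdRoot r i j ∨ B m = stdRoot r j i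

/-- `B` splits along the partition `Π` (with `Π′ = P`): exactly one edge of
`Tree(B)` joins `Π′` and `Π″`. -/
def SplitsAlong (B : Fin (r - 1) → Fin r → ℝ) (P : Finset (Fin r)) : Prop :=
  ∃! pr : Fin r × Fin r, pr.1 ∈ P ∧ pr.2 ∉ P ∧ IsTreeEdge B pr.1 pr.2

/-- The linking root `β_link = α^{pq}` with `p ∈ Π′`, `q ∈ Π″`. -/
def betaLink (B : Fin (r - 1) → Fin r → ℝ) (P : Finset (Fin r)) : Fin r → ℝ :=
  if h : ∃ pr : Fin r × Fin r, pr.1 ∈ P ∧ pr.2 ∉ P ∧ IsTreeEdge B pr.1 pr.2 then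
    stdRoot r h.choose.1 h.choose.2
  else 0


/-- The dot action `λ ↦ σ.λ = σ·(λ+ρ) − ρ`, as a permutation of `ℝ^r`. -/
def dotEquiv (r : ℕ) (σ : Equiv.Perm (Fin r)) : Equiv.Perm (Fin r → ℝ) :=
  (Equiv.addRight (rho r)).trans
    ((Equiv.arrowCongr σ (Equiv.refl ℝ)).trans (Equiv.subRight (rho r)))

section Helpers

lemma dotEquiv_apply (σ : Equiv.Perm (Fin r)) (l : Fin r → ℝ) :
    dotEquiv r σ l = permVec σ (l + rho r) - rho r := rfl
lemma permVec_add (σ : Equiv.Perm (Fin r)) (a b : Fin r → ℝ) :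
    permVec σ (a + b) = permVec σ a + permVec σ b := rfl
lemma permVec_neg (σ : Equiv.Perm (Fin r)) (a : Fin r → ℝ) :
    permVec σ (-a) = - permVec σ a := rfl
lemma permVec_smul (σ : Equiv.Perm (Fin r)) (c : ℝ) (a : Fin r → ℝ) :
    permVec σ (c • a) = c • permVec σ a := rfl
lemma dotEquiv_add_apply (σ : Equiv.Perm (Fin r)) (l v : Fin r → ℝ) :
    dotEquiv r σ (l + v) = dotEquiv r σ l + permVec σ v := by
  simp only [dotEquiv_apply]
  rw [show l + v + rho r = (l + rho r) + v by abel, permVec_add]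
  abel

def dotHom (r : ℕ) : Equiv.Perm (Fin r) →* Equiv.Perm (Fin r → ℝ) where
  toFun σ := dotEquiv r σ
  map_one' := by
    ext l
    simp [dotEquiv_apply, permVec]
  map_mul' σ τ := by
    ext l
    simp [Equiv.Perm.mul_apply, dotEquiv_apply, permVec, Equiv.Perm.mul_apply]

lemma dotHom_injective : Function.Injective (dotHom r) := by
  intro σ τ h
  have key : ∀ i : Fin r, σ⁻¹ i = τ⁻¹ i := by
    intro i
    have h2 := congrFun (congrArg (fun e : Equiv.Perm (Fin r → ℝ) =>
      e ((fun j : Fin r => (j : ℝ)) - rho r)) h) i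
    simp only [dotHom, MonoidHom.coe_mk, OneHom.coe_mk, dotEquiv_apply, sub_add_cancel,
      permVec, Pi.sub_apply] at h2
    have : ((σ⁻¹ i : Fin r) : ℝ) = ((τ⁻¹ i : Fin r) : ℝ) := by linarith
    exact Fin.ext (Nat.cast_injective this)
  have : σ⁻¹ = τ⁻¹ := Equiv.ext key
  exact inv_injective this

lemma conj_addRight_dot (σ : Equiv.Perm (Fin r)) (t : Fin r → ℝ) :
    Equiv.addRight t * dotEquiv r σ * (Equiv.addRight t)⁻¹
      = (dotEquiv r σ).trans (Equiv.addRight (t - permVec σ t)) := by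
  ext l
  have h1 : ((Equiv.addRight t)⁻¹ : Equiv.Perm (Fin r → ℝ)) l = l + (-t) := by
    show (Equiv.addRight t).symm l = l + (-t)
    rw [Equiv.addRight_symm]; rfl
  simp only [Equiv.Perm.mul_apply, h1, Equiv.trans_apply, Equiv.coe_addRight,
    dotEquiv_add_apply, permVec_neg]
  simp only [Pi.add_apply, Pi.sub_apply, Pi.neg_apply]
  ring

lemma dot_conj_addRight (σ : Equiv.Perm (Fin r)) (v : Fin r → ℝ) :
    dotEquiv r σ * Equiv.addRight v * (dotEquiv r σ)⁻¹ = Equiv.addRight (permVec σ v) := by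
  ext l
  have h1 : ((dotEquiv r σ)⁻¹ : Equiv.Perm (Fin r → ℝ)) = (dotEquiv r σ).symm := rfl
  simp only [Equiv.Perm.mul_apply, h1, Equiv.coe_addRight, dotEquiv_add_apply,
    Equiv.apply_symm_apply]

lemma permVec_stdRoot (σ : Equiv.Perm (Fin r)) (a b : Fin r) :
    permVec σ (stdRoot r a b) = stdRoot r (σ a) (σ b) := by
  funext i
  simp only [permVec, stdRoot]
  congr 2 <;> · exact propext ⟨fun h => by rw [← h]; simp, fun h => by rw [h]; simp⟩

lemma addRight_zero_perm : (Equiv.addRight (0 : Fin r → ℝ)) = 1 := by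
  ext l; simp
lemma addRight_add_perm (a b : Fin r → ℝ) :
    Equiv.addRight (a + b) = Equiv.addRight a * Equiv.addRight b := by
  ext l; simp [Equiv.Perm.mul_apply]; abel
lemma addRight_neg_perm (a : Fin r → ℝ) :
    Equiv.addRight (-a) = (Equiv.addRight a)⁻¹ := by
  rw [eq_inv_iff_mul_eq_one, ← addRight_add_perm, neg_add_cancel, addRight_zero_perm]


def phiAff (r : ℕ) (t : Fin r → ℝ) : Equiv.Perm (Fin r) →* Equiv.Perm (Fin r → ℝ) :=
  ((MulAut.conj (Equiv.addRight t)).toMonoidHom).comp (dotHom r)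

lemma phiAff_injective (t : Fin r → ℝ) : Function.Injective (phiAff r t) :=
  ((MulAut.conj (Equiv.addRight t)).injective).comp dotHom_injective

lemma phiAff_apply (t : Fin r → ℝ) (σ : Equiv.Perm (Fin r)) :
    phiAff r t σ = (dotEquiv r σ).trans (Equiv.addRight (t - permVec σ t)) := by
  rw [← conj_addRight_dot]
  rfl

/-- adjacent transpositions generate the symmetric group -/
lemma adj_closure (r : ℕ) :
    Subgroup.closure {e : Equiv.Perm (Fin r) | ∃ i : ℕ, ∃ h : i + 1 < r,
      e = Equiv.swap ⟨i, Nat.lt_of_not_le (by omega)⟩ ⟨i + 1, h⟩} = ⊤ := by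
  set S : Set (Equiv.Perm (Fin r)) := {e : Equiv.Perm (Fin r) | ∃ i : ℕ, ∃ h : i + 1 < r,
      e = Equiv.swap ⟨i, Nat.lt_of_not_le (by omega)⟩ ⟨i + 1, h⟩} with hS
  have key : ∀ d : ℕ, ∀ x y : Fin r, x.val < y.val → y.val - x.val ≤ d →
      Equiv.swap x y ∈ Subgroup.closure S := by
    intro d
    induction d with
    | zero => intro x y h1 h2; omega
    | succ d ih =>
      intro x y h1 h2
      by_cases hc : y.val = x.val + 1
      · apply Subgroup.subset_closure
        exact ⟨x.val, by omega, by congr 1 <;> exact Fin.ext (by simp; omega)⟩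
      · set c : Fin r := ⟨y.val - 1, Nat.lt_of_not_le (by omega)⟩ with hc'
        have hcv : c.val = y.val - 1 := rfl
        have hxc : x ≠ c := by
          intro h; have h2 := congrArg Fin.val h; rw [hcv] at h2; omega
        have hxy : x ≠ y := by intro h; rw [h] at h1; omega
        have hcy : c ≠ y := by
          intro h; have h2 := congrArg Fin.val h; rw [hcv] at h2; omega
        have h3 : Equiv.swap c y ∈ Subgroup.closure S := by
          apply Subgroup.subset_closure
          exact ⟨c.val, by rw [hcv]; omega, by congr 1 <;> exact Fin.ext (by simp [hcv]; omega)⟩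
        have h4 : Equiv.swap x c ∈ Subgroup.closure S := ih x c (by rw [hcv]; omega)
          (by rw [hcv]; omega)
        have h5 : Equiv.swap x y = Equiv.swap c y * Equiv.swap x c * (Equiv.swap c y)⁻¹ := by
          rw [← Equiv.swap_apply_apply]
          congr 1
          · exact (Equiv.swap_apply_of_ne_of_ne hxc hxy).symm
          · exact (Equiv.swap_apply_left c y).symm
        rw [h5]
        exact mul_mem (mul_mem h3 h4) (inv_mem h3)
  rw [eq_top_iff, ← Equiv.Perm.closure_isSwap, Subgroup.closure_le]
  rintro e ⟨x, y, hxy, rfl⟩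
  rcases Nat.lt_or_ge x.val y.val with h | h
  · exact key (y.val - x.val) x y h le_rfl
  · have h' : y.val < x.val := by
      rcases Nat.lt_or_ge y.val x.val with h2 | h2
      · exact h2
      · exact absurd (Fin.ext (by omega)) hxy
    rw [Equiv.swap_comm]
    exact key (x.val - y.val) y x h' le_rfl


def tplus (r k : ℕ) : Fin r → ℝ := fun i => if i.val = r - 1 then -((k : ℝ) + r) else 0
def tminus (r k : ℕ) : Fin r → ℝ := fun i => if i.val = 0 then ((k : ℝ) + r) else 0

lemma permVec_swap_fix (σ : Equiv.Perm (Fin r)) (t : Fin r → ℝ)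
    (h : ∀ j, t (σ j) = t j) : t - permVec σ t = 0 := by
  funext j
  have := h (σ⁻¹ j)
  rw [show σ (σ⁻¹ j) = j from σ.apply_symm_apply j] at this
  simp [permVec, this]

lemma trans_addRight_zero (e : Equiv.Perm (Fin r → ℝ)) :
    e.trans (Equiv.addRight (0 : Fin r → ℝ)) = e := by
  ext l; simp

/-- P1 for tplus -/
lemma phiAff_tplus_small (k : ℕ) (i : ℕ) (h : i + 2 < r) :
    phiAff r (tplus r k) (Equiv.swap ⟨i, Nat.lt_of_not_le (by omega)⟩ ⟨i + 1, Nat.lt_of_not_le (by omega)⟩)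
      = dotEquiv r (Equiv.swap ⟨i, Nat.lt_of_not_le (by omega)⟩ ⟨i + 1, Nat.lt_of_not_le (by omega)⟩) := by
  rw [phiAff_apply, permVec_swap_fix, trans_addRight_zero]
  intro j
  rcases eq_or_ne j ⟨i, Nat.lt_of_not_le (by omega)⟩ with rfl | hj1
  · rw [Equiv.swap_apply_left]
    simp only [tplus]
    rw [if_neg (show ¬(i + 1 = r - 1) by omega), if_neg (show ¬(i = r - 1) by omega)]
  · rcases eq_or_ne j ⟨i + 1, Nat.lt_of_not_le (by omega)⟩ with rfl | hj2
    · rw [Equiv.swap_apply_right]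
      simp only [tplus]
      rw [if_neg (show ¬(i = r - 1) by omega), if_neg (show ¬(i + 1 = r - 1) by omega)]
    · rw [Equiv.swap_apply_of_ne_of_ne hj1 hj2]

/-- P2 for tplus -/
lemma phiAff_tplus_last (hr : 2 ≤ r) (k : ℕ) :
    phiAff r (tplus r k) (Equiv.swap ⟨r - 2, Nat.lt_of_not_le (by omega)⟩ ⟨r - 1, Nat.lt_of_not_le (by omega)⟩)
      = (dotEquiv r (Equiv.swap ⟨r - 2, Nat.lt_of_not_le (by omega)⟩ ⟨r - 1, Nat.lt_of_not_le (by omega)⟩)).trans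
          (Equiv.addRight (((k : ℝ) + r) • stdRoot r ⟨r - 2, Nat.lt_of_not_le (by omega)⟩ ⟨r - 1, Nat.lt_of_not_le (by omega)⟩)) := by
  have hne : (⟨r - 2, Nat.lt_of_not_le (by omega)⟩ : Fin r) ≠ ⟨r - 1, Nat.lt_of_not_le (by omega)⟩ := by
    intro h; have := congrArg Fin.val h; simp only [Fin.val_mk] at this; omega
  have hd : tplus r k - permVec (Equiv.swap ⟨r - 2, Nat.lt_of_not_le (by omega)⟩ ⟨r - 1, Nat.lt_of_not_le (by omega)⟩) (tplus r k)
      = ((k : ℝ) + r) • stdRoot r ⟨r - 2, Nat.lt_of_not_le (by omega)⟩ ⟨r - 1, Nat.lt_of_not_le (by omega)⟩ := by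
    funext j
    simp only [Pi.sub_apply, permVec, Pi.smul_apply, stdRoot, smul_eq_mul]
    rw [Equiv.swap_inv]
    rcases eq_or_ne j ⟨r - 2, Nat.lt_of_not_le (by omega)⟩ with rfl | hj1
    · rw [Equiv.swap_apply_left]
      simp only [tplus]
      simp [hne, show ¬(r - 2 = r - 1) by omega]
    · rcases eq_or_ne j ⟨r - 1, Nat.lt_of_not_le (by omega)⟩ with rfl | hj2
      · rw [Equiv.swap_apply_right]
        simp only [tplus]
        simp [hne.symm, show ¬(r - 2 = r - 1) by omega]
      · rw [Equiv.swap_apply_of_ne_of_ne hj1 hj2, if_neg hj1, if_neg hj2]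
        ring
  rw [phiAff_apply, hd]

/-- M1 for tminus -/
lemma phiAff_tminus_big (k : ℕ) (i : ℕ) (h1 : 1 ≤ i) (h : i + 1 < r) :
    phiAff r (tminus r k) (Equiv.swap ⟨i, Nat.lt_of_not_le (by omega)⟩ ⟨i + 1, Nat.lt_of_not_le (by omega)⟩)
      = dotEquiv r (Equiv.swap ⟨i, Nat.lt_of_not_le (by omega)⟩ ⟨i + 1, Nat.lt_of_not_le (by omega)⟩) := by
  rw [phiAff_apply, permVec_swap_fix, trans_addRight_zero]
  intro j
  rcases eq_or_ne j ⟨i, Nat.lt_of_not_le (by omega)⟩ with rfl | hj1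
  · rw [Equiv.swap_apply_left]
    simp only [tminus]
    rw [if_neg (show ¬(i + 1 = 0) by omega), if_neg (show ¬(i = 0) by omega)]
  · rcases eq_or_ne j ⟨i + 1, Nat.lt_of_not_le (by omega)⟩ with rfl | hj2
    · rw [Equiv.swap_apply_right]
      simp only [tminus]
      rw [if_neg (show ¬(i = 0) by omega), if_neg (show ¬(i + 1 = 0) by omega)]
    · rw [Equiv.swap_apply_of_ne_of_ne hj1 hj2]

/-- M2 for tminus -/
lemma phiAff_tminus_first (hr : 2 ≤ r) (k : ℕ) :
    phiAff r (tminus r k) (Equiv.swap ⟨0, Nat.lt_of_not_le (by omega)⟩ ⟨1, Nat.lt_of_not_le (by omega)⟩)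
      = (dotEquiv r (Equiv.swap ⟨0, Nat.lt_of_not_le (by omega)⟩ ⟨1, Nat.lt_of_not_le (by omega)⟩)).trans
          (Equiv.addRight (((k : ℝ) + r) • stdRoot r ⟨0, Nat.lt_of_not_le (by omega)⟩ ⟨1, Nat.lt_of_not_le (by omega)⟩)) := by
  have hne : (⟨0, Nat.lt_of_not_le (by omega)⟩ : Fin r) ≠ ⟨1, Nat.lt_of_not_le (by omega)⟩ := by
    intro h; have := congrArg Fin.val h; simp only [Fin.val_mk] at this; omega
  have hd : tminus r k - permVec (Equiv.swap ⟨0, Nat.lt_of_not_le (by omega)⟩ ⟨1, Nat.lt_of_not_le (by omega)⟩) (tminus r k)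
      = ((k : ℝ) + r) • stdRoot r ⟨0, Nat.lt_of_not_le (by omega)⟩ ⟨1, Nat.lt_of_not_le (by omega)⟩ := by
    funext j
    simp only [Pi.sub_apply, permVec, Pi.smul_apply, stdRoot, smul_eq_mul]
    rw [Equiv.swap_inv]
    rcases eq_or_ne j ⟨0, Nat.lt_of_not_le (by omega)⟩ with rfl | hj1
    · rw [Equiv.swap_apply_left]
      simp only [tminus]
      simp [hne]
    · rcases eq_or_ne j ⟨1, Nat.lt_of_not_le (by omega)⟩ with rfl | hj2
      · rw [Equiv.swap_apply_right]
        simp only [tminus]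
        simp [hne.symm]
      · rw [Equiv.swap_apply_of_ne_of_ne hj1 hj2, if_neg hj1, if_neg hj2]
        ring
  rw [phiAff_apply, hd]


end Helpers

/-- (Lemma `lem:generate`.)  The subgroups `Σ_r^+` and
`Σ_r^−` of the affine Weyl group `Σ̃[k]` are isomorphic to `Σ_r`, and for
`r > 2` they generate `Σ̃[k]`.  (Indices are `0`-based.) -/
theorem stabilizer_subgroups_generate_affine_weyl_group
    (r : ℕ) (hr : 2 ≤ r) (k : ℕ)
    (Gaff Gplus Gminus : Subgroup (Equiv.Perm (Fin r → ℝ)))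
    -- `Σ̃[k]`: generated by the dot action and the translations by `(k+r)Λ`
    (hGaff : Gaff = Subgroup.closure
      ({e | ∃ σ : Equiv.Perm (Fin r), e = dotEquiv r σ} ∪
        {e | ∃ γ : Fin r → ℤ, (∑ i, γ i) = 0 ∧
          e = Equiv.addRight (((k : ℝ) + r) • fun i => (γ i : ℝ))}))
    -- `Σ_r^+`: generated by `λ ↦ s_{i,i+1}.λ` (`1 ≤ i ≤ r−2`) and
    -- `λ ↦ s_{r−1,r}.λ + (k+r)·α^{r−1,r}`
    (hGplus : Gplus = Subgroup.closure
      ({e | ∃ i : ℕ, ∃ _hi : i + 2 < r,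
          e = dotEquiv r (Equiv.swap ⟨i, by omega⟩ ⟨i + 1, by omega⟩)} ∪
        {(dotEquiv r (Equiv.swap ⟨r - 2, by omega⟩ ⟨r - 1, by omega⟩)).trans
          (Equiv.addRight (((k : ℝ) + r) •
            stdRoot r ⟨r - 2, by omega⟩ ⟨r - 1, by omega⟩))}))
    -- `Σ_r^−`: generated by `λ ↦ s_{i,i+1}.λ` (`2 ≤ i ≤ r−1`) and
    -- `λ ↦ s_{1,2}.λ + (k+r)·α^{1,2}`
    (hGminus : Gminus = Subgroup.closure
      ({e | ∃ i : ℕ, ∃ _h1 : 1 ≤ i, ∃ _hi : i + 1 < r,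
          e = dotEquiv r (Equiv.swap ⟨i, by omega⟩ ⟨i + 1, by omega⟩)} ∪
        {(dotEquiv r (Equiv.swap ⟨0, by omega⟩ ⟨1, by omega⟩)).trans
          (Equiv.addRight (((k : ℝ) + r) •
            stdRoot r ⟨0, by omega⟩ ⟨1, by omega⟩))})) :
    Nonempty (Gplus ≃* Equiv.Perm (Fin r)) ∧
    Nonempty (Gminus ≃* Equiv.Perm (Fin r)) ∧
    (2 < r → Gplus ⊔ Gminus = Gaff) := by
  -- `Gplus` is the range of the injective homomorphism `phiAff r (tplus r k)`
  have hplus_range : Gplus = (phiAff r (tplus r k)).range := by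
    rw [hGplus]
    apply le_antisymm
    · rw [Subgroup.closure_le]
      rintro e (⟨i, hi, rfl⟩ | rfl)
      · exact ⟨Equiv.swap ⟨i, by omega⟩ ⟨i + 1, by omega⟩, phiAff_tplus_small k i hi⟩
      · exact ⟨Equiv.swap ⟨r - 2, by omega⟩ ⟨r - 1, by omega⟩, phiAff_tplus_last hr k⟩
    · rw [MonoidHom.range_eq_map, ← adj_closure r, MonoidHom.map_closure, Subgroup.closure_le]
      rintro e ⟨s, ⟨i, hi, rfl⟩, rfl⟩
      by_cases hii : i + 2 < r
      · exact Subgroup.subset_closure (Or.inl ⟨i, hii, phiAff_tplus_small k i hii⟩)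
      · have h1 : (⟨i, by omega⟩ : Fin r) = ⟨r - 2, by omega⟩ := Fin.ext (by simp; omega)
        have h2 : (⟨i + 1, hi⟩ : Fin r) = ⟨r - 1, by omega⟩ := Fin.ext (by simp; omega)
        show phiAff r (tplus r k) (Equiv.swap ⟨i, by omega⟩ ⟨i + 1, hi⟩) ∈ _
        rw [h1, h2, phiAff_tplus_last hr k]
        exact Subgroup.subset_closure (Or.inr rfl)
  have hminus_range : Gminus = (phiAff r (tminus r k)).range := by
    rw [hGminus]
    apply le_antisymm
    · rw [Subgroup.closure_le]
      rintro e (⟨i, h1, hi, rfl⟩ | rfl)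
      · exact ⟨Equiv.swap ⟨i, by omega⟩ ⟨i + 1, by omega⟩, phiAff_tminus_big k i h1 hi⟩
      · exact ⟨Equiv.swap ⟨0, by omega⟩ ⟨1, by omega⟩, phiAff_tminus_first hr k⟩
    · rw [MonoidHom.range_eq_map, ← adj_closure r, MonoidHom.map_closure, Subgroup.closure_le]
      rintro e ⟨s, ⟨i, hi, rfl⟩, rfl⟩
      by_cases hii : 1 ≤ i
      · exact Subgroup.subset_closure (Or.inl ⟨i, hii, hi, phiAff_tminus_big k i hii hi⟩)
      · have h1 : (⟨i, by omega⟩ : Fin r) = ⟨0, by omega⟩ := Fin.ext (by simp; omega)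
        have h2 : (⟨i + 1, hi⟩ : Fin r) = ⟨1, by omega⟩ := Fin.ext (by simp; omega)
        show phiAff r (tminus r k) (Equiv.swap ⟨i, by omega⟩ ⟨i + 1, hi⟩) ∈ _
        rw [h1, h2, phiAff_tminus_first hr k]
        exact Subgroup.subset_closure (Or.inr rfl)
  refine ⟨⟨(MulEquiv.subgroupCongr hplus_range).trans
      (MonoidHom.ofInjective (phiAff_injective (tplus r k))).symm⟩,
    ⟨(MulEquiv.subgroupCongr hminus_range).trans
      (MonoidHom.ofInjective (phiAff_injective (tminus r k))).symm⟩, fun hr3 => ?_⟩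
  -- Now `r > 2`.  Show `Gplus ⊔ Gminus = Gaff`.
  -- All dot-action elements lie in the join.
  have hdot : ∀ σ : Equiv.Perm (Fin r), dotEquiv r σ ∈ Gplus ⊔ Gminus := by
    intro σ
    have hle : Subgroup.closure {e : Equiv.Perm (Fin r) | ∃ i : ℕ, ∃ h : i + 1 < r,
        e = Equiv.swap ⟨i, by omega⟩ ⟨i + 1, h⟩} ≤
        Subgroup.comap (dotHom r) (Gplus ⊔ Gminus) := by
      rw [Subgroup.closure_le]
      rintro e ⟨i, hi, rfl⟩
      rw [SetLike.mem_coe, Subgroup.mem_comap]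
      by_cases hii : i + 2 < r
      · refine Subgroup.mem_sup_left ?_
        rw [hGplus]
        exact Subgroup.subset_closure (Or.inl ⟨i, hii, rfl⟩)
      · refine Subgroup.mem_sup_right ?_
        rw [hGminus]
        exact Subgroup.subset_closure (Or.inl ⟨i, by omega, hi, rfl⟩)
    have hmem : σ ∈ Subgroup.closure {e : Equiv.Perm (Fin r) | ∃ i : ℕ, ∃ h : i + 1 < r,
        e = Equiv.swap ⟨i, by omega⟩ ⟨i + 1, h⟩} := by
      rw [adj_closure r]; trivial
    exact hle hmem
  -- The basic translation lies in the join.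
  have hvplus : Equiv.addRight (((k : ℝ) + r) • stdRoot r ⟨r - 2, by omega⟩ ⟨r - 1, by omega⟩)
      ∈ Gplus ⊔ Gminus := by
    have hg : (dotEquiv r (Equiv.swap ⟨r - 2, by omega⟩ ⟨r - 1, by omega⟩)).trans
        (Equiv.addRight (((k : ℝ) + r) • stdRoot r ⟨r - 2, by omega⟩ ⟨r - 1, by omega⟩))
        ∈ Gplus ⊔ Gminus := by
      refine Subgroup.mem_sup_left ?_
      rw [hGplus]
      exact Subgroup.subset_closure (Or.inr rfl)
    have hd := hdot (Equiv.swap ⟨r - 2, by omega⟩ ⟨r - 1, by omega⟩)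
    have heq : Equiv.addRight (((k : ℝ) + r) • stdRoot r ⟨r - 2, by omega⟩ ⟨r - 1, by omega⟩)
        = ((dotEquiv r (Equiv.swap ⟨r - 2, by omega⟩ ⟨r - 1, by omega⟩)).trans
          (Equiv.addRight (((k : ℝ) + r) • stdRoot r ⟨r - 2, by omega⟩ ⟨r - 1, by omega⟩)))
          * (dotEquiv r (Equiv.swap ⟨r - 2, by omega⟩ ⟨r - 1, by omega⟩))⁻¹ := by
      rw [← Equiv.Perm.mul_def, mul_inv_cancel_right]
    rw [heq]
    exact mul_mem hg (inv_mem hd)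
  -- All root translations lie in the join.
  have hall : ∀ a b : Fin r, Equiv.addRight (((k : ℝ) + r) • stdRoot r a b)
      ∈ Gplus ⊔ Gminus := by
    intro a b
    rcases eq_or_ne a b with rfl | hab
    · have h0 : stdRoot r a a = 0 := by funext t; simp [stdRoot]
      rw [h0, smul_zero, addRight_zero_perm]
      exact one_mem _
    · have hne2 : (⟨r - 2, by omega⟩ : Fin r) ≠ ⟨r - 1, by omega⟩ := by
        intro h; have := congrArg Fin.val h; simp at this; omega
      obtain ⟨σ, hσ1, hσ2⟩ : ∃ σ : Equiv.Perm (Fin r),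
          σ ⟨r - 2, by omega⟩ = a ∧ σ ⟨r - 1, by omega⟩ = b := by
        refine ⟨(Equiv.swap ((Equiv.swap ⟨r - 2, by omega⟩ a) ⟨r - 1, by omega⟩) b)
          * (Equiv.swap ⟨r - 2, by omega⟩ a), ?_, ?_⟩
        · rw [Equiv.Perm.mul_apply, Equiv.swap_apply_left]
          refine Equiv.swap_apply_of_ne_of_ne ?_ hab
          intro h
          have h2 : (Equiv.swap ⟨r - 2, by omega⟩ a) ⟨r - 2, by omega⟩
              = (Equiv.swap ⟨r - 2, by omega⟩ a) ⟨r - 1, by omega⟩ := by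
            rw [Equiv.swap_apply_left]; exact h
          exact hne2 ((Equiv.swap ⟨r - 2, by omega⟩ a).injective h2)
        · rw [Equiv.Perm.mul_apply, Equiv.swap_apply_left]
      have hperm : permVec σ (((k : ℝ) + r) • stdRoot r ⟨r - 2, by omega⟩ ⟨r - 1, by omega⟩)
          = ((k : ℝ) + r) • stdRoot r a b := by
        rw [permVec_smul, permVec_stdRoot, hσ1, hσ2]
      rw [← hperm, ← dot_conj_addRight]
      exact mul_mem (mul_mem (hdot σ) hvplus) (inv_mem (hdot σ))
  apply le_antisymm
  · -- `Gplus ⊔ Gminus ≤ Gaff`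
    rw [hGaff]
    have hgen : ∀ (a b : Fin r), a ≠ b →
        Equiv.addRight (((k : ℝ) + r) • stdRoot r a b) ∈
          Subgroup.closure
            ({e | ∃ σ : Equiv.Perm (Fin r), e = dotEquiv r σ} ∪
              {e | ∃ γ : Fin r → ℤ, (∑ i, γ i) = 0 ∧
                e = Equiv.addRight (((k : ℝ) + r) • fun i => (γ i : ℝ))}) := by
      intro a b hab
      apply Subgroup.subset_closure
      refine Or.inr ⟨fun t => (if t = a then 1 else 0) - (if t = b then 1 else 0), ?_, ?_⟩
      · rw [Finset.sum_sub_distrib]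
        rw [Finset.sum_ite_eq' Finset.univ a (fun _ => (1 : ℤ)),
          Finset.sum_ite_eq' Finset.univ b (fun _ => (1 : ℤ))]
        simp
      · congr 1
        funext t
        simp only [Pi.smul_apply, smul_eq_mul, stdRoot]
        congr 1
        push_cast
        ring
    apply sup_le
    · rw [hGplus, Subgroup.closure_le]
      rintro e (⟨i, hi, rfl⟩ | rfl)
      · exact Subgroup.subset_closure (Or.inl ⟨_, rfl⟩)
      · rw [← Equiv.Perm.mul_def]
        refine mul_mem (hgen _ _ ?_) (Subgroup.subset_closure (Or.inl ⟨_, rfl⟩))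
        intro h; have := congrArg Fin.val h; simp at this; omega
    · rw [hGminus, Subgroup.closure_le]
      rintro e (⟨i, h1, hi, rfl⟩ | rfl)
      · exact Subgroup.subset_closure (Or.inl ⟨_, rfl⟩)
      · rw [← Equiv.Perm.mul_def]
        refine mul_mem (hgen _ _ ?_) (Subgroup.subset_closure (Or.inl ⟨_, rfl⟩))
        intro h; have := congrArg Fin.val h; simp at this
  · -- `Gaff ≤ Gplus ⊔ Gminus`
    rw [hGaff, Subgroup.closure_le]
    rintro e (⟨σ, rfl⟩ | ⟨γ, hγ, rfl⟩)
    · exact hdot σ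
    · -- translation by `(k+r)γ`
      let T : AddSubgroup (Fin r → ℝ) :=
        { carrier := {v | Equiv.addRight v ∈ Gplus ⊔ Gminus}
          zero_mem' := by
            simp only [Set.mem_setOf_eq, addRight_zero_perm]
            exact one_mem _
          add_mem' := by
            intro x y hx hy
            simp only [Set.mem_setOf_eq, addRight_add_perm] at *
            exact mul_mem hx hy
          neg_mem' := by
            intro x hx
            simp only [Set.mem_setOf_eq, addRight_neg_perm] at *
            exact inv_mem hx }
      have hsum0 : (∑ j : Fin r, (γ j : ℝ)) = 0 := by
        rw [← Int.cast_sum, hγ, Int.cast_zero]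
      have hrepr : (((k : ℝ) + r) • fun i => (γ i : ℝ))
          = ∑ j : Fin r, γ j • (((k : ℝ) + r) • stdRoot r j ⟨r - 1, by omega⟩) := by
        funext t
        simp only [Pi.smul_apply, smul_eq_mul, Finset.sum_apply, zsmul_eq_mul, stdRoot,
          Pi.intCast_apply]
        rw [Finset.sum_congr rfl (fun j _ => show (γ j : ℝ) *
            (((k : ℝ) + r) * ((if t = j then (1 : ℝ) else 0) -
              (if t = (⟨r - 1, by omega⟩ : Fin r) then (1 : ℝ) else 0)))
            = (if t = j then ((k : ℝ) + r) * (γ j : ℝ) else 0)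
              - (((k : ℝ) + r) * (if t = (⟨r - 1, by omega⟩ : Fin r) then (1 : ℝ) else 0))
                  * (γ j : ℝ) from by split_ifs <;> ring)]
        rw [Finset.sum_sub_distrib, Finset.sum_ite_eq Finset.univ t
          (fun j => ((k : ℝ) + r) * (γ j : ℝ)), ← Finset.mul_sum, hsum0, mul_zero, sub_zero,
          if_pos (Finset.mem_univ t)]
      have hT : (((k : ℝ) + r) • fun i => (γ i : ℝ)) ∈ T := by
        rw [hrepr]
        exact AddSubgroup.sum_mem T fun j _ => AddSubgroup.zsmul_mem T
          (hall j ⟨r - 1, by omega⟩) (γ j)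
      exact hT


end Verlinde
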